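/- Let A be a commutative unital C*-algebra and let E be a Hilbert C*-module over A possessing an orthonormal basis. Suppose Φ : L(E) → L(E) satisfies Φ(T) = ATB for all T ∈ L(E), where A ∈ L(E) is injective and B = C* for an injective adjointable map C. If Φ is surjective, then A and B are invertible in L(E). -/

import Mathlib

/-- A (left) Hilbert C*-module structure on `E` over the C*-algebra `A`:
an `A`-valued inner product, `A`-linear in the first variable and conjugate
`A`-linear in the second, positive and definite, compatible with the norm of `E`,
for which `E` is complete. -/
structure HilbertModule (A : Type*) (E : Type*) [CStarAlgebra A]
    [NormedAddCommGroup E] [Module A E] where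
  inner : E → E → A
  inner_add_left : ∀ x y z : E, inner (x + y) z = inner x z + inner y z
  inner_smul_left : ∀ (a : A) (x y : E), inner (a • x) y = a * inner x y
  inner_conj_symm : ∀ x y : E, inner y x = star (inner x y)
  inner_self_pos : ∀ x : E, ∃ c : A, inner x x = star c * c
  inner_self_eq_zero : ∀ x : E, inner x x = 0 → x = 0
  norm_sq_eq : ∀ x : E, ‖x‖ ^ 2 = ‖inner x x‖
  complete : CompleteSpace E

namespace HilbertModule

variable {A E : Type*} [CStarAlgebra A] [NormedAddCommGroup E] [Module A E]
variable (M : HilbertModule A E)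

/-- The "rank-one" module map `θ_{x,y} : ξ ↦ ⟨ξ,y⟩x`. -/
def theta (x y : E) : E → E := fun ξ => M.inner ξ y • x

/-- `e : ι → E` is an orthonormal basis: `⟨e i, e j⟩ = δ_{ij}` and every `x`
is the norm-convergent sum `Σ_i ⟨x, e i⟩ • e i`. -/
structure IsONB {ι : Type*} (e : ι → E) : Prop where
  ortho_self : ∀ i : ι, M.inner (e i) (e i) = 1
  ortho_ne : ∀ i j : ι, i ≠ j → M.inner (e i) (e j) = 0
  total : ∀ x : E, HasSum (fun i => M.inner x (e i) • e i) x

/-- The coordinately invertible elements with respect to the orthonormal basis `e`: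
nonzero elements all of whose coordinates are zero or invertible. -/
def CI {ι : Type*} (e : ι → E) : Set E :=
  {x | x ≠ 0 ∧ ∀ i : ι, M.inner (e i) x = 0 ∨ IsUnit (M.inner (e i) x)}

/-- `F(E)`: the `A`-linear span of the rank-one module maps `θ_{x,y}`. -/
def F : Submodule A (E → E) :=
  Submodule.span A {T : E → E | ∃ x y : E, T = M.theta x y}

theorem theta_mem_F (x y : E) : M.theta x y ∈ M.F :=
  Submodule.subset_span ⟨x, y, rfl⟩

/-- `θ_{x,y}` as an element of `F(E)`. -/
def thetaF (x y : E) : M.F := ⟨M.theta x y, M.theta_mem_F x y⟩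

/-- A map `T : E → E` is `A`-linear if it is additive and `A`-homogeneous. -/
def IsALinear (T : E → E) : Prop :=
  (∀ x y : E, T (x + y) = T x + T y) ∧ ∀ (a : A) (x : E), T (a • x) = a • T x

/-- A map `T : E → E` is conjugate `A`-linear if it is additive and
`T (a • x) = star a • T x`. -/
def IsConjLinear (T : E → E) : Prop :=
  (∀ x y : E, T (x + y) = T x + T y) ∧ ∀ (a : A) (x : E), T (a • x) = star a • T x

/-- An `A`-linear map `Φ : F(E) → F(E)` is rank decreasing if it sends each `θ_{x,y₀}`
with `y₀ ∈ CI` to some `θ_{s,t₀}` with `t₀ ∈ CI`. -/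
def RankDecreasing {ι : Type*} (e : ι → E) (Φ : M.F →ₗ[A] M.F) : Prop :=
  ∀ x : E, ∀ y₀ ∈ M.CI e, ∃ s : E, ∃ t₀ ∈ M.CI e,
    (Φ (M.thetaF x y₀) : E → E) = M.theta s t₀

/-- An `A`-linear map `Φ : F(E) → F(E)` is rank-1 preserving if it is rank decreasing
and moreover `s ≠ 0` whenever `x ≠ 0`. -/
def Rank1Preserving {ι : Type*} (e : ι → E) (Φ : M.F →ₗ[A] M.F) : Prop :=
  ∀ x : E, ∀ y₀ ∈ M.CI e, ∃ s : E, ∃ t₀ ∈ M.CI e,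
    (Φ (M.thetaF x y₀) : E → E) = M.theta s t₀ ∧ (x ≠ 0 → s ≠ 0)

end HilbertModule

namespace HilbertModule

variable {A E : Type*} [CStarAlgebra A] [NormedAddCommGroup E] [Module A E]
variable (M : HilbertModule A E)

theorem inner_smul_right (a : A) (x y : E) :
    M.inner x (a • y) = M.inner x y * star a := by
  rw [M.inner_conj_symm (a • y) x, M.inner_smul_left, star_mul,
    ← M.inner_conj_symm y x]

/-- `L(E)`: the adjointable operators on `E`, represented as pairs `(T, T*)` with
`⟨T x, y⟩ = ⟨x, T* y⟩`.  The subtype topology induced from pointwise convergence of the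
pair `(T, T*)` (i.e. by the seminorms `T ↦ ‖T x‖` and `T ↦ ‖T* x‖`) is the strict topology. -/
abbrev L : Type _ :=
  {p : (E → E) × (E → E) // ∀ x y : E, M.inner (p.1 x) y = M.inner x (p.2 y)}

theorem theta_adjoint (x y : E) (ξ η : E) :
    M.inner (M.theta x y ξ) η = M.inner ξ (M.theta y x η) := by
  show M.inner (M.inner ξ y • x) η = M.inner ξ (M.inner η x • y)
  rw [M.inner_smul_left, M.inner_smul_right, ← M.inner_conj_symm η x]

/-- `θ_{x,y}` as an element of `L(E)`; its adjoint is `θ_{y,x}`. -/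
def thetaL (x y : E) : M.L :=
  ⟨(M.theta x y, M.theta y x), M.theta_adjoint x y⟩

/-- A conjugate `A`-linear map `T : E → E` is adjointable if there is a conjugate
`A`-linear `S` with `⟨T x, y⟩ = ⟨S y, x⟩` for all `x, y`. -/
def ConjAdjointable (T : E → E) : Prop :=
  IsConjLinear (A := A) T ∧ ∃ S : E → E, IsConjLinear (A := A) S ∧
    ∀ x y : E, M.inner (T x) y = M.inner (S y) x

theorem inner_zero_left' (x : E) : M.inner 0 x = 0 := by
  have h := M.inner_add_left 0 0 x
  rw [add_zero] at h
  exact left_eq_add.mp h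

theorem inner_neg_left' (u x : E) : M.inner (-u) x = - M.inner u x := by
  have h := M.inner_add_left u (-u) x
  rw [add_neg_cancel, M.inner_zero_left'] at h
  exact eq_neg_of_add_eq_zero_right h.symm

theorem ext_right' (u v : E) (h : ∀ x : E, M.inner x u = M.inner x v) : u = v := by
  have h' : ∀ x : E, M.inner u x = M.inner v x := fun x => by
    have hx := h x
    rw [M.inner_conj_symm u x, M.inner_conj_symm v x] at hx
    exact star_injective hx
  have key : M.inner (u - v) (u - v) = 0 := by
    rw [sub_eq_add_neg, M.inner_add_left, M.inner_neg_left', h' (u + -v)]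
    exact add_neg_cancel _
  have := M.inner_self_eq_zero _ key
  exact sub_eq_zero.mp this

/-- flip: `⟨x, p y⟩ = ⟨p* x, y⟩`. -/
theorem flip' (p : M.L) (x y : E) : M.inner x (p.1.1 y) = M.inner (p.1.2 x) y := by
  rw [M.inner_conj_symm (p.1.1 y) x, p.2 y x, ← M.inner_conj_symm y (p.1.2 x)]

end HilbertModule

/-- if `Φ : L(E) → L(E)` has the form `Φ(T) = A T B` where `A ∈ L(E)` is
injective and `B = C*` for an injective adjointable `C`, and `Φ` is surjective, then `A`
and `B` are invertible in `L(E)`. -/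
theorem surjective_form_invertible {A E ι : Type*} [CommCStarAlgebra A]
    [NormedAddCommGroup E] [Module A E]
    (M : HilbertModule A E) (e : ι → E) (he : M.IsONB e)
    (A₀ C₀ : M.L) (hA : Function.Injective A₀.1.1) (hC : Function.Injective C₀.1.1)
    (Φ : M.L → M.L)
    (hΦ : ∀ T : M.L, (Φ T).1.1 = fun ξ => A₀.1.1 (T.1.1 (C₀.1.2 ξ)))
    (hsurj : Function.Surjective Φ) :
    (∃ A' : M.L, A₀.1.1 ∘ A'.1.1 = id ∧ A'.1.1 ∘ A₀.1.1 = id) ∧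
    (∃ B' : M.L, C₀.1.2 ∘ B'.1.1 = id ∧ B'.1.1 ∘ C₀.1.2 = id) := by
  -- Find `T` with `Φ T = id`.
  obtain ⟨T, hT⟩ := hsurj ⟨((id : E → E), (id : E → E)), fun x y => rfl⟩
  have h1 : ∀ ξ : E, A₀.1.1 (T.1.1 (C₀.1.2 ξ)) = ξ := by
    intro ξ
    have h := hΦ T
    rw [hT] at h
    exact (congrFun h ξ).symm
  -- `C₀ ∘ T* ∘ A₀* = id` (taking adjoints of `h1`).
  have h2 : ∀ ξ : E, C₀.1.1 (T.1.2 (A₀.1.2 ξ)) = ξ := by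
    intro ξ
    apply M.ext_right'
    intro x
    calc M.inner x (C₀.1.1 (T.1.2 (A₀.1.2 ξ)))
        = M.inner (C₀.1.2 x) (T.1.2 (A₀.1.2 ξ)) := M.flip' C₀ x _
      _ = M.inner (T.1.1 (C₀.1.2 x)) (A₀.1.2 ξ) := (T.2 _ _).symm
      _ = M.inner (A₀.1.1 (T.1.1 (C₀.1.2 x))) ξ := (A₀.2 _ _).symm
      _ = M.inner x ξ := by rw [h1 x]
  -- Two-sided inverses via injectivity.
  have h4 : ∀ ξ : E, T.1.2 (A₀.1.2 (C₀.1.1 ξ)) = ξ := fun ξ => hC (h2 (C₀.1.1 ξ))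
  have hA2 : ∀ ξ : E, T.1.1 (C₀.1.2 (A₀.1.1 ξ)) = ξ := fun ξ => hA (h1 (A₀.1.1 ξ))
  -- `C₀* ∘ (A₀ ∘ T) = id` (taking adjoints of `h4`).
  have h3 : ∀ ξ : E, C₀.1.2 (A₀.1.1 (T.1.1 ξ)) = ξ := by
    intro ξ
    apply M.ext_right'
    intro x
    calc M.inner x (C₀.1.2 (A₀.1.1 (T.1.1 ξ)))
        = M.inner (C₀.1.1 x) (A₀.1.1 (T.1.1 ξ)) := (C₀.2 _ _).symm
      _ = M.inner (A₀.1.2 (C₀.1.1 x)) (T.1.1 ξ) := M.flip' A₀ _ _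
      _ = M.inner (T.1.2 (A₀.1.2 (C₀.1.1 x))) ξ := M.flip' T _ _
      _ = M.inner x ξ := by rw [h4 x]
  constructor
  · refine ⟨⟨(fun ξ => T.1.1 (C₀.1.2 ξ), fun ξ => C₀.1.1 (T.1.2 ξ)), ?_⟩, ?_, ?_⟩
    · intro x y
      calc M.inner (T.1.1 (C₀.1.2 x)) y
          = M.inner (C₀.1.2 x) (T.1.2 y) := T.2 _ _
        _ = M.inner x (C₀.1.1 (T.1.2 y)) := (M.flip' C₀ x _).symm
    · funext ξ; exact h1 ξ
    · funext ξ; exact hA2 ξ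
  · refine ⟨⟨(fun ξ => A₀.1.1 (T.1.1 ξ), fun ξ => T.1.2 (A₀.1.2 ξ)), ?_⟩, ?_, ?_⟩
    · intro x y
      calc M.inner (A₀.1.1 (T.1.1 x)) y
          = M.inner (T.1.1 x) (A₀.1.2 y) := A₀.2 _ _
        _ = M.inner x (T.1.2 (A₀.1.2 y)) := T.2 _ _
    · funext ξ; exact h3 ξ
    · funext ξ; exact h1 ξ
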